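/- Let G = (V, E) be a finite multigraph with an orientation D minimizing the overflow ov(D) = Σ_v max(outdeg_D(v) − d, 0) over all orientations of G. Let Y be the set of vertices with outdegree > d in D, and let Y' be the set of vertices reachable from Y by a directed path in D. Then every vertex in Y' has outdegree at least d in D. -/

import Mathlib

open Finset

section Aux

variable {V E : Type*} [Fintype V] [Fintype E] [DecidableEq V] [DecidableEq E]
  (h1 h2 : E → V)

private def mydeg (o : E → Bool) (v : V) : ℕ :=
  (Finset.univ.filter (fun e : E => (if o e then h1 e else h2 e) = v)).card

private lemma mydeg_flip (o : E → Bool) (e : E) (a b : V)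
    (ha : (if o e then h1 e else h2 e) = a) (hb : (if o e then h2 e else h1 e) = b) (v : V) :
    mydeg h1 h2 (Function.update o e (!o e)) v + (if a = v then 1 else 0)
      = mydeg h1 h2 o v + (if b = v then 1 else 0) := by
  classical
  have hsrc : (if Function.update o e (!o e) e then h1 e else h2 e) = b := by
    rw [Function.update_self]
    cases h : o e <;> rw [h] at hb <;> simpa using hb
  unfold mydeg
  rw [Finset.card_filter, Finset.card_filter,
    ← Finset.sum_erase_add _ _ (Finset.mem_univ e),
    ← Finset.sum_erase_add _ _ (Finset.mem_univ e)]
  have hsum : ∑ x ∈ Finset.univ.erase e,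
        (if (if Function.update o e (!o e) x then h1 x else h2 x) = v then 1 else 0)
      = ∑ x ∈ Finset.univ.erase e, (if (if o x then h1 x else h2 x) = v then 1 else 0) := by
    refine Finset.sum_congr rfl fun x hx => ?_
    rw [Function.update_of_ne (Finset.ne_of_mem_erase hx)]
  rw [hsum, hsrc, ha]
  by_cases h1v : a = v <;> by_cases h2v : b = v <;> simp [h1v, h2v] <;> omega

private lemma chain_update (o : E → Bool) (e : E) (a : V)
    (ha : (if o e then h1 e else h2 e) = a) :
    ∀ (b : V) (t : List V), a ∉ b :: t →
      List.Chain (fun x y : V => ∃ e' : E, (if o e' then h1 e' else h2 e') = x ∧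
        (if o e' then h2 e' else h1 e') = y) b t →
      List.Chain (fun x y : V => ∃ e' : E,
        (if Function.update o e (!o e) e' then h1 e' else h2 e') = x ∧
        (if Function.update o e (!o e) e' then h2 e' else h1 e') = y) b t := by
  intro b t
  induction t generalizing b with
  | nil => intro _ _; exact List.Chain.nil
  | cons c t ih =>
    intro hmem hchain
    rcases List.isChain_cons_cons.mp hchain with ⟨⟨e', he1, he2⟩, hchain⟩
    have hne : e' ≠ e := by
      rintro rfl
      exact hmem (by simp [ha.symm.trans he1])
    refine List.Chain.cons ⟨e', ?_, ?_⟩ (ih c (fun h => hmem (List.mem_cons_of_mem _ h)) hchain)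
    · rw [Function.update_of_ne hne]; exact he1
    · rw [Function.update_of_ne hne]; exact he2

end Aux

private lemma getLastD_append' {α : Type*} (s : List α) (a : α) (t : List α) (d : α) :
    (s ++ a :: t).getLastD d = t.getLastD a := by
  induction s generalizing d with
  | nil => rw [List.nil_append, List.getLastD_cons]
  | cons x s ih => rw [List.cons_append, List.getLastD_cons]; exact ih x

section Aux2
variable {V E : Type*} [Fintype V] [Fintype E] [DecidableEq V] [DecidableEq E]
  (h1 h2 : E → V)

private lemma chain_flip :
    ∀ (n : ℕ) (o : E → Bool) (a : V) (l : List V), l.length ≤ n →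
      List.Chain (fun x y : V => ∃ e : E, (if o e then h1 e else h2 e) = x ∧
        (if o e then h2 e else h1 e) = y) a l →
      ∃ o' : E → Bool, ∀ v, mydeg h1 h2 o' v + (if a = v then 1 else 0)
        = mydeg h1 h2 o v + (if l.getLastD a = v then 1 else 0) := by
  intro n
  induction n with
  | zero =>
    intro o a l hl _
    have hnil : l = [] := List.length_eq_zero_iff.mp (Nat.le_zero.mp hl)
    subst hnil
    exact ⟨o, fun v => by simp⟩
  | succ n ih =>
    intro o a l hl hchain
    cases l with
    | nil => exact ⟨o, fun v => by simp⟩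
    | cons b t =>
      by_cases hmem : a ∈ b :: t
      · obtain ⟨s, t', hst⟩ := List.append_of_mem hmem
        rw [hst] at hchain
        have hchain' := (List.isChain_cons_split.mp hchain).2
        have hlen : t'.length ≤ n := by
          have h := congrArg List.length hst
          simp only [List.length_cons, List.length_append] at h hl
          omega
        obtain ⟨o', ho'⟩ := ih o a t' hlen hchain'
        refine ⟨o', fun v => ?_⟩
        rw [hst, getLastD_append']
        exact ho' v
      · replace hchain := List.isChain_cons_cons.mp hchain
        obtain ⟨⟨e, he1, he2⟩, hchain⟩ := hchain
        have hchain₁ := chain_update h1 h2 o e a he1 b t hmem hchain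
        obtain ⟨o', ho'⟩ := ih (Function.update o e (!o e)) b t (by simpa using hl) hchain₁
        refine ⟨o', fun v => ?_⟩
        have hflip := mydeg_flip h1 h2 o e a b he1 he2 v
        have hv := ho' v
        rw [List.getLastD_cons]
        by_cases h1v : a = v <;> by_cases h2v : b = v <;>
          by_cases h3v : t.getLastD b = v <;> simp [h1v, h2v, h3v] at hflip hv ⊢ <;> omega

end Aux2

theorem stmt_1 {V E : Type*} [Fintype V] [Fintype E] [DecidableEq V]
    (h1 h2 : E → V) (d : ℕ) (hd : 1 ≤ d) (o : E → Bool)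
    (outdeg : (E → Bool) → V → ℕ)
    (houtdeg : ∀ o' v, outdeg o' v =
      (Finset.univ.filter (fun e : E => (if o' e then h1 e else h2 e) = v)).card)
    (hmin : ∀ o' : E → Bool, ∑ v : V, (outdeg o v - d) ≤ ∑ v : V, (outdeg o' v - d))
    (u w : V) (hu : d < outdeg o u)
    (hpath : Relation.ReflTransGen
      (fun a b : V => ∃ e : E, (if o e then h1 e else h2 e) = a ∧
        (if o e then h2 e else h1 e) = b) u w) :
    d ≤ outdeg o w := by
  classical
  by_cases huw : u = w
  · exact le_of_lt (huw ▸ hu)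
  have hdeg : ∀ (oo : E → Bool) (v : V), outdeg oo v = mydeg h1 h2 oo v :=
    fun oo v => (houtdeg oo v).trans rfl
  obtain ⟨l, hchain, hlast⟩ := List.exists_isChain_cons_of_relationReflTransGen hpath
  obtain ⟨o', ho'⟩ := chain_flip h1 h2 l.length o u l le_rfl hchain
  have hw : l.getLastD u = w := by rw [← List.getLast_eq_getLastD]; exact hlast
  rw [hw] at ho'
  by_contra hcon
  push_neg at hcon
  rw [hdeg] at hcon hu
  have hmin' := hmin o'
  simp only [hdeg] at hmin'
  have hlt : ∑ v : V, (mydeg h1 h2 o' v - d) < ∑ v : V, (mydeg h1 h2 o v - d) := by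
    apply Finset.sum_lt_sum
    · intro i _
      have hi := ho' i
      rcases eq_or_ne w i with h2i | h2i
      · subst h2i
        simp [huw] at hi
        omega
      · simp only [if_neg h2i, Nat.add_zero] at hi
        by_cases h1i : u = i <;> simp [h1i] at hi <;> omega
    · refine ⟨u, Finset.mem_univ u, ?_⟩
      have hi := ho' u
      simp [Ne.symm huw] at hi
      omega
  exact absurd hmin' (not_le.mpr hlt)
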